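/- Suppose A₁,…,A_k are n×n matrices, R is an n×m matrix whose conical hull K_R(R) is a proper cone, and for each i there exist α_i ∈ ℝ and entrywise positive P_i with (α_i I + A_i)R = R P_i. If J is any matrix in the conical hull of {A₁,…,A_k} other than 0, then J satisfies the strict sub-tangentiality condition with respect to K_R(R): for all nonzero δx ∈ K_R(R) and nonzero h ∈ K_R(R)* with ⟨h, δx⟩ = 0, one has ⟨h, J δx⟩ > 0. -/

import Mathlib

open Matrix

/-- A (convex) cone: closed under addition and nonnegative scaling. -/
def IsConvexCone {n : ℕ} (K : Set (Fin n → ℝ)) : Prop :=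
  (∀ x ∈ K, ∀ y ∈ K, x + y ∈ K) ∧ (∀ x ∈ K, ∀ c : ℝ, 0 ≤ c → c • x ∈ K)

/-- A proper cone: closed convex cone with nonempty interior, pointed. -/
def IsProperCone {n : ℕ} (K : Set (Fin n → ℝ)) : Prop :=
  IsConvexCone K ∧ IsClosed K ∧ (interior K).Nonempty ∧ ∀ x ∈ K, -x ∈ K → x = 0

/-- The dual cone. -/
def dualCone {n : ℕ} (K : Set (Fin n → ℝ)) : Set (Fin n → ℝ) :=
  {h | ∀ r ∈ K, 0 ≤ h ⬝ᵥ r}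

/-- The conical hull of the columns of a matrix (R-representation). -/
def coneOf {n m : ℕ} (R : Matrix (Fin n) (Fin m) ℝ) : Set (Fin n → ℝ) :=
  {x | ∃ p : Fin m → ℝ, (∀ j, 0 ≤ p j) ∧ x = R *ᵥ p}


private lemma dual_pos_interior' {n : ℕ} (K : Set (Fin n → ℝ)) (h : Fin n → ℝ)
    (hh : ∀ r ∈ K, 0 ≤ h ⬝ᵥ r) (hh0 : h ≠ 0) {z : Fin n → ℝ}
    (hz : z ∈ interior K) : 0 < h ⬝ᵥ z := by
  rcases lt_or_eq_of_le (hh z (interior_subset hz)) with hlt | heqz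
  · exact hlt
  exfalso
  rcases Metric.isOpen_iff.mp isOpen_interior z hz with ⟨ε, hε, hball⟩
  have key : ∀ v : Fin n → ℝ, h ⬝ᵥ v = 0 := by
    intro v
    by_cases hv : v = 0
    · simp [hv]
    have hnv : 0 < ‖v‖ := norm_pos_iff.mpr hv
    set t := ε / (2 * ‖v‖) with ht
    have htpos : 0 < t := by positivity
    have hmem : ∀ s : ℝ, |s| ≤ t → z + s • v ∈ K := by
      intro s hs
      apply interior_subset (hball ?_)
      rw [Metric.mem_ball, dist_self_add_left, norm_smul]
      calc ‖s‖ * ‖v‖ ≤ t * ‖v‖ := by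
            apply mul_le_mul_of_nonneg_right _ (norm_nonneg v)
            simpa using hs
        _ = ε / 2 := by rw [ht, div_mul_eq_mul_div, mul_comm 2 ‖v‖, ← div_div, mul_div_cancel_right₀ _ hnv.ne']
        _ < ε := by linarith
    have h1 := hh _ (hmem t (by simp [le_of_lt htpos, abs_of_pos htpos]))
    have h2 := hh _ (hmem (-t) (by simp [abs_of_pos htpos, le_of_lt htpos]))
    rw [dotProduct_add, dotProduct_smul] at h1 h2
    rw [← heqz] at h1 h2
    simp [smul_eq_mul] at h1 h2
    nlinarith
  exact hh0 (by simpa [dotProduct_self_eq_zero] using key h)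

private lemma add_smul_interior' {n : ℕ} {K : Set (Fin n → ℝ)} (hK : IsConvexCone K)
    {y z : Fin n → ℝ} {t : ℝ} (hy : y ∈ K) (hz : z ∈ interior K) (ht : 0 < t) :
    y + t • z ∈ interior K := by
  rw [mem_interior_iff_mem_nhds]
  have hcont : Continuous fun x : Fin n → ℝ => t⁻¹ • (x - y) := by continuity
  have hval : (fun x : Fin n → ℝ => t⁻¹ • (x - y)) (y + t • z) ∈ interior K := by
    simp only [add_sub_cancel_left, smul_smul, inv_mul_cancel₀ ht.ne', one_smul]
    exact hz
  have hnhds : (fun x : Fin n → ℝ => t⁻¹ • (x - y)) ⁻¹' (interior K) ∈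
      nhds (y + t • z) :=
    (isOpen_interior.preimage hcont).mem_nhds hval
  apply Filter.mem_of_superset hnhds
  intro x hx
  have : x = y + t • (t⁻¹ • (x - y)) := by
    simp [smul_smul, mul_inv_cancel₀ ht.ne']
  rw [this]
  exact hK.1 y hy _ (hK.2 _ (interior_subset hx) t ht.le)

private lemma pos_mem_interior' {n m : ℕ} [NeZero m] (R : Matrix (Fin n) (Fin m) ℝ)
    (hK : IsConvexCone (coneOf R)) (hint : (interior (coneOf R)).Nonempty)
    {q : Fin m → ℝ} (hq : ∀ j, 0 < q j) : R *ᵥ q ∈ interior (coneOf R) := by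
  obtain ⟨x₀, hx₀⟩ := hint
  obtain ⟨p₀, hp₀, hx₀eq⟩ := interior_subset hx₀
  have hne : (Finset.univ : Finset (Fin m)).Nonempty := Finset.univ_nonempty
  set M := Finset.univ.sup' hne p₀ with hM
  have hM0 : 0 ≤ M := le_trans (hp₀ ⟨0, Nat.pos_of_ne_zero (NeZero.ne m)⟩)
    (Finset.le_sup' p₀ (Finset.mem_univ _))
  set c := Finset.univ.inf' hne q with hc
  have hcpos : 0 < c := by
    obtain ⟨j, _, hj⟩ := Finset.exists_mem_eq_inf' hne q
    rw [hc, hj]; exact hq j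
  set t := c / (M + 1) with htdef
  have htpos : 0 < t := by positivity
  have hnonneg : ∀ j, 0 ≤ q j - t * p₀ j := by
    intro j
    have h1 : p₀ j ≤ M := Finset.le_sup' p₀ (Finset.mem_univ j)
    have h2 : c ≤ q j := Finset.inf'_le q (Finset.mem_univ j)
    have h3 : t * p₀ j ≤ t * M := mul_le_mul_of_nonneg_left h1 htpos.le
    have h4 : t * M ≤ c := by
      rw [htdef, div_mul_eq_mul_div, div_le_iff₀ (by linarith)]
      nlinarith
    linarith
  have hdecomp : R *ᵥ q = R *ᵥ (q - t • p₀) + t • x₀ := by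
    rw [hx₀eq, ← Matrix.mulVec_smul, ← Matrix.mulVec_add]
    ext j; simp
  rw [hdecomp]
  exact add_smul_interior' hK ⟨q - t • p₀, fun j => by simpa using hnonneg j, rfl⟩
    hx₀ htpos

/-- If K_R(R) is proper and each generator Aᵢ of a conical relaxation passes the
LP test (αᵢI + Aᵢ)R = RPᵢ with Pᵢ > 0, then every nonzero element J of the conical
hull of the Aᵢ satisfies strict sub-tangentiality with respect to K_R(R). -/
theorem stmt6 {n m k : ℕ} (A : Fin k → Matrix (Fin n) (Fin n) ℝ)
    (R : Matrix (Fin n) (Fin m) ℝ)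
    (hproper : IsProperCone (coneOf R))
    (α : Fin k → ℝ) (P : Fin k → Matrix (Fin m) (Fin m) ℝ)
    (hP : ∀ i, ∀ a b, 0 < P i a b)
    (heq : ∀ i, (α i • (1 : Matrix (Fin n) (Fin n) ℝ) + A i) * R = R * P i)
    (J : Matrix (Fin n) (Fin n) ℝ) (hJ0 : J ≠ 0)
    (hJ : ∃ p : Fin k → ℝ, (∀ i, 0 ≤ p i) ∧ J = ∑ i, p i • A i) :
    ∀ δx ∈ coneOf R, δx ≠ 0 → ∀ h ∈ dualCone (coneOf R), h ≠ 0 →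
      h ⬝ᵥ δx = 0 → 0 < h ⬝ᵥ (J *ᵥ δx) := by
  intro δx hδx hδ0 h hh hh0 hortho
  obtain ⟨p, hp, hpeq⟩ := hδx
  obtain ⟨c, hc, hJeq⟩ := hJ
  -- p ≠ 0
  have hp0 : p ≠ 0 := by
    rintro rfl; exact hδ0 (by simp [hpeq])
  obtain ⟨b₀, hb₀⟩ : ∃ b, 0 < p b := by
    by_contra hcon
    push_neg at hcon
    exact hp0 (funext fun b => le_antisymm (hcon b) (hp b))
  haveI : NeZero m := ⟨fun hm => (by subst hm; exact (Fin.elim0 b₀ : False))⟩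
  -- each A i contributes positively
  have hterm : ∀ i, 0 < h ⬝ᵥ (A i *ᵥ δx) := by
    intro i
    have hq : ∀ a, 0 < (P i *ᵥ p) a := by
      intro a
      have : (P i *ᵥ p) a = ∑ b, P i a b * p b := rfl
      rw [this]
      apply Finset.sum_pos' (fun b _ => mul_nonneg (hP i a b).le (hp b))
      exact ⟨b₀, Finset.mem_univ _, mul_pos (hP i a b₀) hb₀⟩
    have hint : R *ᵥ (P i *ᵥ p) ∈ interior (coneOf R) :=
      pos_mem_interior' R hproper.1 hproper.2.2.1 hq
    have hpos : 0 < h ⬝ᵥ (R *ᵥ (P i *ᵥ p)) := dual_pos_interior' _ h hh hh0 hint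
    have hAi : A i *ᵥ δx = R *ᵥ (P i *ᵥ p) - α i • δx := by
      have := congrArg (fun M => M *ᵥ p) (heq i)
      simp only [Matrix.add_mul, Matrix.add_mulVec, Matrix.smul_mul, Matrix.one_mul,
        Matrix.smul_mulVec, ← Matrix.mulVec_mulVec] at this
      rw [← hpeq] at this
      rw [hpeq] at this ⊢
      linear_combination (norm := module) this
    rw [hAi, dotProduct_sub, dotProduct_smul, hortho]
    simpa using hpos
  -- some coefficient positive
  obtain ⟨i₀, hi₀⟩ : ∃ i, 0 < c i := by
    by_contra hcon
    push_neg at hcon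
    apply hJ0
    rw [hJeq]
    apply Finset.sum_eq_zero
    intro i _
    have : c i = 0 := le_antisymm (hcon i) (hc i)
    simp [this]
  have hkey : ∀ s : Finset (Fin k),
      h ⬝ᵥ ((∑ i ∈ s, c i • A i) *ᵥ δx) = ∑ i ∈ s, c i * (h ⬝ᵥ (A i *ᵥ δx)) := by
    intro s
    induction s using Finset.induction with
    | empty => simp
    | insert a s hx ih =>
      rw [Finset.sum_insert hx, Matrix.add_mulVec, dotProduct_add, ih,
        Finset.sum_insert hx, Matrix.smul_mulVec, dotProduct_smul, smul_eq_mul]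
  rw [hJeq, hkey]
  apply Finset.sum_pos' (fun i _ => mul_nonneg (hc i) (hterm i).le)
  exact ⟨i₀, Finset.mem_univ _, mul_pos hi₀ (hterm i₀)⟩
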